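/- Let {|Ψ_k⟩}_{k=0}^{N-1} be unit vectors in a finite-dimensional Hilbert space that are linearly independent and pairwise nonorthogonal, and let U, V be unitaries. If |⟨Ψ_k| V† U |Ψ_k⟩| = 1 for every k, then there exists a single phase e^{iφ} such that U|ψ⟩ = e^{iφ} V|ψ⟩ for every |ψ⟩ in the span of the |Ψ_k⟩. -/

import Mathlib

open scoped InnerProductSpace

/-- Faithfulness of the Loschmidt-echo cost: if all per-state fidelities equal 1
for a linearly independent, pairwise nonorthogonal family of unit vectors, then
`U` and `V` agree on the span up to a single global phase. -/
theorem subspace_phase_agreement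
    {E : Type*} [NormedAddCommGroup E] [InnerProductSpace ℂ E] [FiniteDimensional ℂ E]
    (N : ℕ) (Ψ : Fin N → E)
    (hunit : ∀ k, ‖Ψ k‖ = 1)
    (hli : LinearIndependent ℂ Ψ)
    (hno : ∀ k k', ⟪Ψ k, Ψ k'⟫_ℂ ≠ 0)
    (U V : E ≃ₗᵢ[ℂ] E)
    (hfid : ∀ k, ‖⟪Ψ k, V.symm (U (Ψ k))⟫_ℂ‖ = 1) :
    ∃ φ : ℝ, ∀ ψ ∈ Submodule.span ℂ (Set.range Ψ),
      U ψ = Complex.exp (Complex.I * φ) • V ψ := by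
  classical
  set W : E ≃ₗᵢ[ℂ] E := U.trans V.symm with hWdef
  have hW : ∀ k, ∃ c : ℂ, ‖c‖ = 1 ∧ W (Ψ k) = c • Ψ k := by
    intro k
    have hx : Ψ k ≠ 0 := by
      intro h; have := hunit k; rw [h, norm_zero] at this; norm_num at this
    have hWnorm : ‖W (Ψ k)‖ = 1 := by rw [W.norm_map, hunit k]
    have hy : W (Ψ k) ≠ 0 := by
      intro h; rw [h, norm_zero] at hWnorm; norm_num at hWnorm
    have heq : ‖⟪Ψ k, W (Ψ k)⟫_ℂ‖ = ‖Ψ k‖ * ‖W (Ψ k)‖ := by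
      rw [hunit k, hWnorm]
      simpa [hWdef] using hfid k
    obtain ⟨r, hr0, hr⟩ := (norm_inner_eq_norm_iff hx hy).mp heq
    refine ⟨r, ?_, hr⟩
    have : ‖r • Ψ k‖ = 1 := by rw [← hr, hWnorm]
    rw [norm_smul, hunit k, mul_one] at this
    simpa using this
  choose c habs hc using hW
  have hcc : ∀ k k', c k = c k' := by
    intro k k'
    have h1 : ⟪W (Ψ k), W (Ψ k')⟫_ℂ = ⟪Ψ k, Ψ k'⟫_ℂ := W.inner_map_map _ _
    rw [hc k, hc k', inner_smul_left, inner_smul_right] at h1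
    have h2 : (starRingEnd ℂ) (c k) * c k' * ⟪Ψ k, Ψ k'⟫_ℂ = 1 * ⟪Ψ k, Ψ k'⟫_ℂ := by
      rw [one_mul, mul_assoc]; exact h1
    have hck : (starRingEnd ℂ) (c k) * c k' = 1 := mul_right_cancel₀ (hno k k') h2
    have hkk : (starRingEnd ℂ) (c k) * c k = 1 := by
      rw [mul_comm, Complex.mul_conj]
      norm_cast
      rw [Complex.normSq_eq_norm_sq, habs k]; norm_num
    have hconj0 : (starRingEnd ℂ) (c k) ≠ 0 := by
      intro h
      rw [h, zero_mul] at hkk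
      exact one_ne_zero hkk.symm
    exact mul_left_cancel₀ hconj0 (hkk.trans hck.symm)
  set c0 : ℂ := if h : 0 < N then c ⟨0, h⟩ else 1 with hc0def
  have habs0 : ‖c0‖ = 1 := by
    by_cases h : 0 < N
    · simp [hc0def, h, habs]
    · simp [hc0def, h]
  have hck0 : ∀ k, c k = c0 := by
    intro k
    have h : 0 < N := k.pos
    simp only [hc0def, dif_pos h]
    exact hcc k ⟨0, h⟩
  refine ⟨c0.arg, ?_⟩
  have hexp : Complex.exp (Complex.I * c0.arg) = c0 := by
    rw [mul_comm]
    have := Complex.norm_mul_exp_arg_mul_I c0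
    rw [habs0] at this
    simpa using this
  rw [hexp]
  intro ψ hψ
  induction hψ using Submodule.span_induction with
  | mem x hx =>
      obtain ⟨k, rfl⟩ := hx
      have h := hc k
      rw [hck0 k] at h
      have : V.symm (U (Ψ k)) = c0 • Ψ k := h
      calc U (Ψ k) = V (V.symm (U (Ψ k))) := (V.apply_symm_apply _).symm
        _ = V (c0 • Ψ k) := by rw [this]
        _ = c0 • V (Ψ k) := by simp
  | zero => simp
  | add x y hx hy ihx ihy => rw [map_add, map_add, ihx, ihy, smul_add]
  | smul a x hx ih => rw [map_smul, map_smul, ih, smul_comm]
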